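/- arXiv:1512.02323 — 5 statements merged into one kernel-verified Lean document; each statement's English description precedes it below -/
import Mathlib

section
/- Let θ be harmonic on the unit disk D_* with |θ| < π/2, θ̃ its conjugate vanishing at 0, and set h(z) = e^{θ̃(z)}·cos θ(z)/(π·cos θ(0)), μ₀ = tan θ(0), and μ(z) = μ₀ − π·h̃(z) where h̃ is the conjugate of h vanishing at 0. Then for all z ∈ D_*, μ(z) = π·h(z)·tan θ(z), and θ(z) = −arg(h(z) − i·μ(z)/π). -/
open MeasureTheory Metric Set Filter

noncomputable section

/-- `g` is the harmonic conjugate (vanishing at `0`) of `f` on the open unit disk: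
`f + i·g` is analytic on the disk and `g 0 = 0`. -/
def HasHarmConj (f g : ℂ → ℝ) : Prop :=
  DifferentiableOn ℂ (fun z => (f z : ℂ) + Complex.I * (g z : ℂ)) (Metric.ball (0:ℂ) 1) ∧ g 0 = 0

/-- `f` is harmonic on the open unit disk: on the (simply connected) disk this is
equivalent to being the real part of an analytic function. -/
def HarmonicOnDisk (f : ℂ → ℝ) : Prop := ∃ g : ℂ → ℝ, HasHarmConj f g

lemma const_of_re_zero (F : ℂ → ℂ) (hF : DifferentiableOn ℂ F (Metric.ball (0:ℂ) 1))
    (hre : ∀ z ∈ Metric.ball (0:ℂ) 1, (F z).re = 0) :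
    ∀ z ∈ Metric.ball (0:ℂ) 1, F z = F 0 := by
  have hball : IsOpen (Metric.ball (0:ℂ) 1) := isOpen_ball
  have key : ∀ z ∈ Metric.ball (0:ℂ) 1, fderivWithin ℂ F (Metric.ball (0:ℂ) 1) z = 0 := by
    intro z hz
    have hFz : DifferentiableAt ℂ F z := (hF z hz).differentiableAt (hball.mem_nhds hz)
    have hfw : fderivWithin ℂ F (Metric.ball (0:ℂ) 1) z = fderiv ℂ F z :=
      fderivWithin_of_isOpen hball hz
    rw [hfw]
    have hg0 : (fun w => Complex.reCLM (F w)) =ᶠ[nhds z] fun _ => (0:ℝ) := by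
      filter_upwards [hball.mem_nhds hz] with w hw using hre w hw
    have hgd : HasFDerivAt (fun w => Complex.reCLM (F w))
        (Complex.reCLM.comp ((fderiv ℂ F z).restrictScalars ℝ)) z :=
      Complex.reCLM.hasFDerivAt.comp z (hFz.hasFDerivAt.restrictScalars ℝ)
    have : Complex.reCLM.comp ((fderiv ℂ F z).restrictScalars ℝ) = 0 := by
      rw [← hgd.fderiv, hg0.fderiv_eq]
      exact fderiv_const_apply 0
    have h1 : ((fderiv ℂ F z) 1).re = 0 := congrArg (fun L => L 1) this
    have hI : ((fderiv ℂ F z) Complex.I).re = 0 := congrArg (fun L => L Complex.I) this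
    have hIe : (fderiv ℂ F z) Complex.I = Complex.I * (fderiv ℂ F z) 1 := by
      have := (fderiv ℂ F z).map_smul Complex.I (1:ℂ)
      simpa [smul_eq_mul] using this
    have : (fderiv ℂ F z) 1 = 0 := by
      have h2 : -((fderiv ℂ F z) 1).im = 0 := by
        rw [hIe] at hI; simpa using hI
      apply Complex.ext h1
      simp only [Complex.zero_im]
      linarith
    exact ContinuousLinearMap.ext_ring this
  intro z hz
  exact (convex_ball (0:ℂ) 1).is_const_of_fderivWithin_eq_zero hF key hz (by simp)

/-- With `h = e^{θ̃} cos θ/(π cos θ(0))`, `μ₀ = tan θ(0)`, and `μ = μ₀ − π·h̃`,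
one has `μ = π·h·tan θ` and `θ = −arg(h − i·μ/π)` on the disk. -/
theorem stmt_4 (θ θtil h htil μ : ℂ → ℝ)
    (hconjθ : HasHarmConj θ θtil)
    (hlt : ∀ z ∈ Metric.ball (0:ℂ) 1, |θ z| < Real.pi / 2)
    (hh : ∀ z ∈ Metric.ball (0:ℂ) 1,
      h z = Real.exp (θtil z) * Real.cos (θ z) / (Real.pi * Real.cos (θ 0)))
    (hconjh : HasHarmConj h htil)
    (hμ : ∀ z, μ z = Real.tan (θ 0) - Real.pi * htil z) :
    ∀ z ∈ Metric.ball (0:ℂ) 1,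
      μ z = Real.pi * h z * Real.tan (θ z) ∧
      θ z = - Complex.arg ((h z : ℂ) - Complex.I * ((μ z / Real.pi : ℝ) : ℂ)) := by
  obtain ⟨hθd, hθtil0⟩ := hconjθ
  obtain ⟨hhd, hhtil0⟩ := hconjh
  have h0mem : (0:ℂ) ∈ Metric.ball (0:ℂ) 1 := by simp
  have hθ0 := hlt 0 h0mem
  have hcosθ : ∀ z ∈ Metric.ball (0:ℂ) 1, 0 < Real.cos (θ z) := by
    intro z hz
    have := abs_lt.1 (hlt z hz)
    exact Real.cos_pos_of_mem_Ioo ⟨this.1, this.2⟩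
  have hcos0 : 0 < Real.cos (θ 0) := hcosθ 0 h0mem
  set c := Real.pi * Real.cos (θ 0) with hc
  have hcpos : 0 < c := mul_pos Real.pi_pos hcos0
  set G : ℂ → ℂ := fun z =>
    Complex.exp (-Complex.I * ((θ z : ℂ) + Complex.I * (θtil z : ℂ))) / (c:ℂ) with hGdef
  have hGd : DifferentiableOn ℂ G (Metric.ball (0:ℂ) 1) :=
    ((hθd.const_mul (-Complex.I)).cexp).div_const _
  have hw : ∀ z, (-Complex.I * ((θ z : ℂ) + Complex.I * (θtil z : ℂ))).re = θtil z ∧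
      (-Complex.I * ((θ z : ℂ) + Complex.I * (θtil z : ℂ))).im = -θ z := by
    intro z; constructor <;> simp
  have hGre : ∀ z, (G z).re = Real.exp (θtil z) * Real.cos (θ z) / c := by
    intro z
    simp only [hGdef, Complex.div_ofReal_re, Complex.exp_re, (hw z).1, (hw z).2,
      Real.cos_neg]
  have hGim : ∀ z, (G z).im = -(Real.exp (θtil z) * Real.sin (θ z)) / c := by
    intro z
    simp only [hGdef, Complex.div_ofReal_im, Complex.exp_im, (hw z).1, (hw z).2,
      Real.sin_neg, mul_neg]
  -- D = (h + i htil) - G has zero real part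
  have hD := const_of_re_zero (fun z => ((h z : ℂ) + Complex.I * (htil z : ℂ)) - G z)
    (hhd.sub hGd)
    (by
      intro z hz
      simp only [Complex.sub_re, Complex.add_re, Complex.mul_re, Complex.I_re,
        Complex.I_im, Complex.ofReal_re, Complex.ofReal_im, hGre]
      rw [hh z hz]; ring)
  have hhtilG : ∀ z ∈ Metric.ball (0:ℂ) 1, htil z = (G z).im - (G 0).im := by
    intro z hz
    have := congrArg Complex.im (hD z hz)
    simp only [Complex.sub_im, Complex.add_im, Complex.mul_im, Complex.I_re,
      Complex.I_im, Complex.ofReal_re, Complex.ofReal_im, hhtil0] at this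
    linarith
  have hG0im : (G 0).im = -(Real.sin (θ 0)) / c := by
    rw [hGim 0, hθtil0, Real.exp_zero, one_mul]
  intro z hz
  have hμz : μ z = Real.exp (θtil z) * Real.sin (θ z) / Real.cos (θ 0) := by
    rw [hμ z, hhtilG z hz, hGim z, hG0im, Real.tan_eq_sin_div_cos, hc]
    field_simp
    ring
  have hcoszne : Real.cos (θ z) ≠ 0 := (hcosθ z hz).ne'
  constructor
  · rw [hμz, hh z hz, Real.tan_eq_sin_div_cos, hc]
    field_simp
  · -- arg computation
    have hrep : (h z : ℂ) - Complex.I * ((μ z / Real.pi : ℝ) : ℂ) =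
        ((Real.exp (θtil z) / c : ℝ) : ℂ) *
          ((Real.cos (-θ z) : ℝ) + (Real.sin (-θ z) : ℝ) * Complex.I) := by
      apply Complex.ext <;>
        simp only [Complex.sub_re, Complex.sub_im, Complex.add_re, Complex.add_im,
          Complex.mul_re, Complex.mul_im, Complex.ofReal_re, Complex.ofReal_im,
          Complex.I_re, Complex.I_im, Real.cos_neg, Real.sin_neg]
      · rw [hh z hz]; ring
      · rw [hμz, hc]
        field_simp
        ring
    rw [hrep, Complex.ofReal_cos, Complex.ofReal_sin,
      Complex.arg_real_mul _ (by positivity), Complex.arg_cos_add_sin_mul_I, neg_neg]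
    have := abs_lt.1 (hlt z hz)
    have hpi := Real.pi_gt_three
    constructor <;> [linarith; linarith]
end
end

section
/- Let α: [0, π] → [0, ∞) be continuous with α(0) = 0, α ≥ 0, and ∫_0^{π/2} α(t)/t dt = ∞. Define θ(e^{it}) = −α(t) for 0 ≤ t ≤ π and θ = 0 on the lower half of the unit circle, let θ(z) be the bounded harmonic extension to the disk and θ̃ its conjugate vanishing at 0. Then for 0 < r < 1, with b(r) = arccos((1+r)/2), the bound θ̃(r) ≥ (r/(2π)) ∫_{b(r)}^{π} α(t)/tan(t/2) dt holds, and consequently θ̃(r) → +∞ as r → 1⁻. -/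
open MeasureTheory Metric Set Filter

noncomputable section

lemma absSq (r t : ℝ) :
    (‖Complex.exp ((t:ℂ) * Complex.I) - (r:ℂ)‖)^2
      = 1 - 2*r*Real.cos t + r^2 := by
  rw [← Complex.normSq_eq_norm_sq, Complex.exp_mul_I]
  simp [Complex.normSq_apply, Complex.cos_ofReal_re, Complex.sin_ofReal_re]
  nlinarith [Real.sin_sq_add_cos_sq t]

lemma denomPos {r : ℝ} (h0 : 0 < r) (h1 : r < 1) (t : ℝ) :
    0 < 1 - 2*r*Real.cos t + r^2 := by
  nlinarith [Real.cos_le_one t, Real.neg_one_le_cos t]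

lemma part1 (α : ℝ → ℝ)
    (hcont : ContinuousOn α (Set.Icc 0 Real.pi))
    (hnn : ∀ t ∈ Set.Icc 0 Real.pi, 0 ≤ α t)
    {r : ℝ} (hr0 : 0 < r) (hr1 : r < 1) :
    (r / (2 * Real.pi)) *
        ∫ t in Real.arccos ((1 + r) / 2)..Real.pi,
          α t * Real.cos (t/2) / Real.sin (t/2)
      ≤ (1 / (2 * Real.pi)) *
        ∫ t in (0:ℝ)..Real.pi,
          (2 * r * Real.sin t / (1 - 2*r*Real.cos t + r^2)) * α t := by
  have hπ := Real.pi_pos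
  set b := Real.arccos ((1 + r) / 2) with hbdef
  have hb0 : 0 < b := Real.arccos_pos.2 (by linarith)
  have hbhalf : b ≤ Real.pi / 2 := Real.arccos_le_pi_div_two.2 (by linarith)
  have hbπ : b ≤ Real.pi := by linarith
  have hcosb : Real.cos b = (1 + r) / 2 := Real.cos_arccos (by linarith) (by linarith)
  set P : ℝ → ℝ := fun t => (2 * r * Real.sin t / (1 - 2*r*Real.cos t + r^2)) * α t with hP
  set g : ℝ → ℝ := fun t => α t * Real.cos (t/2) / Real.sin (t/2) with hg
  have hQ : Continuous fun t => 2 * r * Real.sin t / (1 - 2*r*Real.cos t + r^2) :=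
    Continuous.div (by continuity) (by continuity)
      (fun t => ne_of_gt (denomPos hr0 hr1 t))
  have hPcont : ContinuousOn P (Set.Icc 0 Real.pi) := hQ.continuousOn.mul hcont
  have hPint1 : IntervalIntegrable P volume 0 b :=
    (hPcont.mono (by rw [Set.uIcc_of_le hb0.le]; exact Set.Icc_subset_Icc le_rfl hbπ)).intervalIntegrable
  have hPint2 : IntervalIntegrable P volume b Real.pi :=
    (hPcont.mono (by rw [Set.uIcc_of_le hbπ]; exact Set.Icc_subset_Icc hb0.le le_rfl)).intervalIntegrable
  have hsinpos : ∀ t ∈ Set.Icc b Real.pi, 0 < Real.sin (t/2) := by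
    intro t ht
    exact Real.sin_pos_of_pos_of_lt_pi (by linarith [ht.1]) (by linarith [ht.2])
  have hgcont : ContinuousOn (fun t => r * g t) (Set.Icc b Real.pi) := by
    apply ContinuousOn.mul continuousOn_const
    apply ContinuousOn.div
    · exact (hcont.mono (Set.Icc_subset_Icc hb0.le le_rfl)).mul (by fun_prop)
    · fun_prop
    · exact fun t ht => ne_of_gt (hsinpos t ht)
  have hgint : IntervalIntegrable (fun t => r * g t) volume b Real.pi :=
    (hgcont.mono (by rw [Set.uIcc_of_le hbπ])).intervalIntegrable
  have hmono : ∫ t in b..Real.pi, r * g t ≤ ∫ t in b..Real.pi, P t := by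
    apply intervalIntegral.integral_mono_on hbπ hgint hPint2
    intro t ht
    have hα : 0 ≤ α t := hnn t ⟨by linarith [ht.1], ht.2⟩
    have hs : 0 < Real.sin (t/2) := hsinpos t ht
    have hc : 0 ≤ Real.cos (t/2) :=
      Real.cos_nonneg_of_mem_Icc ⟨by linarith [ht.1], by linarith [ht.2]⟩
    have hcost : Real.cos t ≤ (1 + r) / 2 := by
      rw [← hcosb]
      exact Real.cos_le_cos_of_nonneg_of_le_pi hb0.le ht.2 ht.1
    have hD : 0 < 1 - 2*r*Real.cos t + r^2 := denomPos hr0 hr1 t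
    have hsq : Real.sin (t/2)^2 = 1/2 - Real.cos t / 2 := by
      have h := Real.sin_sq_eq_half_sub (t/2)
      rw [show 2*(t/2) = t by ring] at h; exact h
    have hDle : 1 - 2*r*Real.cos t + r^2 ≤ 4 * Real.sin (t/2)^2 := by nlinarith
    have hsin2 : Real.sin t = 2 * Real.sin (t/2) * Real.cos (t/2) := by
      rw [← Real.sin_two_mul]; ring_nf
    show r * g t ≤ P t
    have h1 : r * g t = (r * α t * Real.cos (t/2)) / Real.sin (t/2) := by
      simp only [hg]; ring
    have h2 : P t = (4 * r * Real.sin (t/2) * Real.cos (t/2) * α t)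
        / (1 - 2*r*Real.cos t + r^2) := by
      simp only [hP, hsin2]; ring
    rw [h1, h2, div_le_div_iff₀ hs hD]
    nlinarith [mul_le_mul_of_nonneg_left hDle
      (mul_nonneg (mul_nonneg hr0.le hα) hc)]
  have hhead : 0 ≤ ∫ t in (0:ℝ)..b, P t := by
    apply intervalIntegral.integral_nonneg hb0.le
    intro t ht
    have hsin : 0 ≤ Real.sin t :=
      Real.sin_nonneg_of_nonneg_of_le_pi ht.1 (ht.2.trans hbπ)
    exact mul_nonneg (div_nonneg (by positivity) (denomPos hr0 hr1 t).le)
      (hnn t ⟨ht.1, ht.2.trans hbπ⟩)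
  have hsplit : (∫ t in (0:ℝ)..b, P t) + ∫ t in b..Real.pi, P t
      = ∫ t in (0:ℝ)..Real.pi, P t :=
    intervalIntegral.integral_add_adjacent_intervals hPint1 hPint2
  calc (r / (2 * Real.pi)) * ∫ t in b..Real.pi, g t
      = (1 / (2 * Real.pi)) * ∫ t in b..Real.pi, r * g t := by
        rw [intervalIntegral.integral_const_mul]; ring
    _ ≤ (1 / (2 * Real.pi)) * ∫ t in b..Real.pi, P t := by
        apply mul_le_mul_of_nonneg_left hmono (by positivity)
    _ ≤ (1 / (2 * Real.pi)) * ((∫ t in (0:ℝ)..b, P t) + ∫ t in b..Real.pi, P t) := by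
        apply mul_le_mul_of_nonneg_left (by linarith) (by positivity)
    _ = (1 / (2 * Real.pi)) * ∫ t in (0:ℝ)..Real.pi, P t := by rw [hsplit]

lemma divTail (α : ℝ → ℝ)
    (hcont : ContinuousOn α (Set.Icc 0 Real.pi))
    (hnn : ∀ t ∈ Set.Icc 0 Real.pi, 0 ≤ α t)
    (hdini : ¬ MeasureTheory.IntegrableOn (fun t => α t / t) (Set.Ioc 0 (Real.pi / 2)))
    (M : ℝ) :
    ∃ b₀ ∈ Set.Ioo (0:ℝ) (Real.pi/2), M ≤ ∫ t in b₀..(Real.pi/2), α t / t := by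
  by_contra h
  push_neg at h
  apply hdini
  have hπ := Real.pi_pos
  set c := Real.pi/2 with hcdef
  have hc : 0 < c := by positivity
  set f : ℝ → ℝ := fun t => α t / t with hf
  have hmem : ∀ n : ℕ, c/(n+2) ∈ Set.Ioo (0:ℝ) c := by
    intro n
    constructor
    · positivity
    · apply div_lt_self hc
      have : (0:ℝ) ≤ (n:ℝ) := Nat.cast_nonneg n
      linarith
  have hfi : ∀ n : ℕ, IntegrableOn f (Set.Ioc (c/(n+2)) c) := by
    intro n
    have h1 : 0 < c/(n+2) := (hmem n).1
    have hco : ContinuousOn f (Set.Icc (c/(n+2)) c) := by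
      apply ContinuousOn.div _ continuousOn_id
        (fun t ht => ne_of_gt (lt_of_lt_of_le h1 ht.1))
      apply hcont.mono
      intro t ht
      exact ⟨le_trans h1.le ht.1, by simp only [hcdef] at ht ⊢; linarith [ht.2]⟩
    exact (hco.integrableOn_Icc).mono_set Set.Ioc_subset_Icc_self
  have ha : Tendsto (fun n : ℕ => c/((n:ℝ)+2)) atTop (nhds 0) := by
    apply Tendsto.div_atTop (tendsto_const_nhds)
    exact tendsto_atTop_add_const_right _ 2 tendsto_natCast_atTop_atTop
  have hbound : ∀ᶠ n : ℕ in atTop, (∫ x in Set.Ioc (c/((n:ℝ)+2)) c, ‖f x‖) ≤ M := by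
    refine Filter.Eventually.of_forall fun n => ?_
    have heq : ∀ x ∈ Set.Ioc (c/((n:ℝ)+2)) c, ‖f x‖ = f x := by
      intro x hx
      apply Real.norm_of_nonneg
      have hx0 : 0 < x := lt_of_le_of_lt (hmem n).1.le hx.1
      exact div_nonneg (hnn x ⟨hx0.le, by simp only [hcdef] at hx ⊢; linarith [hx.2]⟩) hx0.le
    rw [setIntegral_congr_fun measurableSet_Ioc heq,
      ← intervalIntegral.integral_of_le ((hmem n).2.le)]
    exact (h _ (hmem n)).le
  exact integrableOn_Ioc_of_intervalIntegral_norm_bounded_left hfi ha hbound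

/-- For continuous `α ≥ 0` on `[0, π]` with `α 0 = 0` and divergent Dini integral, the
harmonic conjugate at radius `r` of the boundary data `θ(e^{it}) = −α(t)` (on the upper
semicircle, `0` below), given by the explicit Poisson-conjugate formula, satisfies the
lower bound with `b(r) = arccos((1+r)/2)` and tends to `+∞` as `r → 1⁻`. -/
theorem stmt_10 (α : ℝ → ℝ)
    (hcont : ContinuousOn α (Set.Icc 0 Real.pi))
    (hα0 : α 0 = 0)
    (hnn : ∀ t ∈ Set.Icc 0 Real.pi, 0 ≤ α t)
    (hdini : ¬ MeasureTheory.IntegrableOn (fun t => α t / t) (Set.Ioc 0 (Real.pi / 2)))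
    (θtil : ℝ → ℝ)
    (hθtil : ∀ r, θtil r = (1 / (2 * Real.pi)) *
      ∫ t in (0:ℝ)..Real.pi,
        (2 * r * Real.sin t / (‖Complex.exp ((t:ℂ) * Complex.I) - (r:ℂ)‖)^2)
          * α t) :
    (∀ r ∈ Set.Ioo (0:ℝ) 1,
      (r / (2 * Real.pi)) *
          ∫ t in Real.arccos ((1 + r) / 2)..Real.pi, α t / Real.tan (t / 2)
        ≤ θtil r) ∧
    Filter.Tendsto θtil (nhdsWithin 1 (Set.Iio 1)) Filter.atTop := by
  have hπ := Real.pi_pos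
  have hθ : ∀ r, θtil r = (1 / (2 * Real.pi)) *
      ∫ t in (0:ℝ)..Real.pi, (2*r*Real.sin t/(1 - 2*r*Real.cos t + r^2)) * α t := by
    intro r
    rw [hθtil r]
    congr 1
    apply intervalIntegral.integral_congr
    intro t _
    simp only [absSq]
  have htan : ∀ a : ℝ, (∫ t in a..Real.pi, α t / Real.tan (t / 2))
      = ∫ t in a..Real.pi, α t * Real.cos (t/2) / Real.sin (t/2) := by
    intro a
    apply intervalIntegral.integral_congr
    intro t _
    simp only [Real.tan_eq_sin_div_cos, div_div_eq_mul_div]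
  have key : ∀ r ∈ Set.Ioo (0:ℝ) 1,
      (r / (2 * Real.pi)) *
          (∫ t in Real.arccos ((1 + r) / 2)..Real.pi,
            α t * Real.cos (t/2) / Real.sin (t/2)) ≤ θtil r := by
    intro r hr
    rw [hθ r]
    exact part1 α hcont hnn hr.1 hr.2
  refine ⟨fun r hr => by rw [htan]; exact key r hr, ?_⟩
  rw [Filter.tendsto_atTop]
  intro M
  obtain ⟨b₀, hb₀, hI⟩ := divTail α hcont hnn hdini (4*Real.pi*(|M|+1))
  have hcosb₀ : Real.cos b₀ < 1 := by
    have := Real.strictAntiOn_cos ⟨le_rfl, hπ.le⟩ ⟨hb₀.1.le, by linarith [hb₀.2]⟩ hb₀.1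
    rwa [Real.cos_zero] at this
  set m : ℝ := max (2*Real.cos b₀ - 1) (1/2) with hm
  have hm1 : m < 1 := by
    apply max_lt (by linarith) (by norm_num)
  have hev : Set.Ioo m 1 ∈ nhdsWithin (1:ℝ) (Set.Iio 1) :=
    Ioo_mem_nhdsLT_of_mem ⟨hm1, le_rfl⟩
  filter_upwards [hev] with r hr
  have hrm : m < r := hr.1
  have hr2 : (1:ℝ)/2 < r := lt_of_le_of_lt (le_max_right _ _) hrm
  have hrc : 2*Real.cos b₀ - 1 < r := lt_of_le_of_lt (le_max_left _ _) hrm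
  have hr0 : 0 < r := by linarith
  have hr1 : r < 1 := hr.2
  set b := Real.arccos ((1 + r) / 2) with hbdef
  have hb0 : 0 < b := Real.arccos_pos.2 (by linarith)
  have hbhalf : b ≤ Real.pi / 2 := Real.arccos_le_pi_div_two.2 (by linarith)
  have hcosb : Real.cos b = (1 + r) / 2 := Real.cos_arccos (by linarith) (by linarith)
  have hbb₀ : b ≤ b₀ := by
    by_contra hlt
    push_neg at hlt
    have := Real.strictAntiOn_cos ⟨hb₀.1.le, by linarith [hb₀.2]⟩
      ⟨hb0.le, by linarith⟩ hlt
    rw [hcosb] at this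
    linarith
  set g : ℝ → ℝ := fun t => α t * Real.cos (t/2) / Real.sin (t/2) with hg
  set f : ℝ → ℝ := fun t => α t / t with hf
  have hsinpos : ∀ t ∈ Set.Icc b Real.pi, 0 < Real.sin (t/2) := fun t ht =>
    Real.sin_pos_of_pos_of_lt_pi (by linarith [ht.1]) (by linarith [ht.2])
  have hgcont : ContinuousOn g (Set.Icc b Real.pi) := by
    apply ContinuousOn.div
    · exact (hcont.mono (Set.Icc_subset_Icc hb0.le le_rfl)).mul (by fun_prop)
    · fun_prop
    · exact fun t ht => ne_of_gt (hsinpos t ht)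
  have hgi1 : IntervalIntegrable g volume b (Real.pi/2) := by
    apply ContinuousOn.intervalIntegrable
    apply hgcont.mono
    rw [Set.uIcc_of_le hbhalf]
    exact Set.Icc_subset_Icc le_rfl (by linarith)
  have hgi2 : IntervalIntegrable g volume (Real.pi/2) Real.pi := by
    apply ContinuousOn.intervalIntegrable
    apply hgcont.mono
    rw [Set.uIcc_of_le (by linarith : Real.pi/2 ≤ Real.pi)]
    exact Set.Icc_subset_Icc (by linarith) le_rfl
  have hfcont : ∀ a₁ a₂ : ℝ, 0 < a₁ → a₂ ≤ Real.pi → ContinuousOn f (Set.Icc a₁ a₂) := by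
    intro a₁ a₂ h1 h2
    apply ContinuousOn.div _ continuousOn_id (fun t ht => ne_of_gt (lt_of_lt_of_le h1 ht.1))
    exact hcont.mono fun t ht => ⟨le_trans h1.le ht.1, le_trans ht.2 h2⟩
  have hfi1 : IntervalIntegrable f volume b (Real.pi/2) := by
    apply ContinuousOn.intervalIntegrable
    apply (hfcont b (Real.pi/2) hb0 (by linarith)).mono
    rw [Set.uIcc_of_le hbhalf]
  have hfi2 : IntervalIntegrable f volume b b₀ := by
    apply ContinuousOn.intervalIntegrable
    apply (hfcont b b₀ hb0 (by linarith [hb₀.2])).mono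
    rw [Set.uIcc_of_le hbb₀]
  have hfi3 : IntervalIntegrable f volume b₀ (Real.pi/2) := by
    apply ContinuousOn.intervalIntegrable
    apply (hfcont b₀ (Real.pi/2) hb₀.1 (by linarith)).mono
    rw [Set.uIcc_of_le hb₀.2.le]
  -- step 1: tail over [π/2, π] is nonneg
  have hsplit1 : (∫ t in b..(Real.pi/2), g t) + ∫ t in (Real.pi/2)..Real.pi, g t
      = ∫ t in b..Real.pi, g t :=
    intervalIntegral.integral_add_adjacent_intervals hgi1 hgi2
  have htail : 0 ≤ ∫ t in (Real.pi/2)..Real.pi, g t := by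
    apply intervalIntegral.integral_nonneg (by linarith)
    intro t ht
    have hs : 0 < Real.sin (t/2) := hsinpos t ⟨le_trans hbhalf ht.1, ht.2⟩
    have hc : 0 ≤ Real.cos (t/2) :=
      Real.cos_nonneg_of_mem_Icc ⟨by linarith [ht.1], by linarith [ht.2]⟩
    have hα : 0 ≤ α t := hnn t ⟨by linarith [ht.1], ht.2⟩
    positivity
  -- step 2: f ≤ g on [b, π/2]
  have hfg : ∫ t in b..(Real.pi/2), f t ≤ ∫ t in b..(Real.pi/2), g t := by
    apply intervalIntegral.integral_mono_on hbhalf hfi1 hgi1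
    intro t ht
    have ht0 : 0 < t := lt_of_lt_of_le hb0 ht.1
    have hs : 0 < Real.sin (t/2) := hsinpos t ⟨ht.1, by linarith [ht.2]⟩
    have hα : 0 ≤ α t := hnn t ⟨ht0.le, by linarith [ht.2]⟩
    have hsle : Real.sin (t/2) ≤ t/2 := Real.sin_le (by linarith)
    have hcge : 1/2 ≤ Real.cos (t/2) := by
      have h1 : Real.cos (Real.pi/4) ≤ Real.cos (t/2) :=
        Real.cos_le_cos_of_nonneg_of_le_pi (by linarith) (by linarith [ht.2]) (by linarith [ht.2])
      have h2 : Real.cos (Real.pi/4) = Real.sqrt 2 / 2 := Real.cos_pi_div_four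
      have h3 : (1:ℝ) ≤ Real.sqrt 2 := by
        rw [show (1:ℝ) = Real.sqrt 1 by simp]
        exact Real.sqrt_le_sqrt (by norm_num)
      linarith
    show α t / t ≤ α t * Real.cos (t/2) / Real.sin (t/2)
    rw [div_le_div_iff₀ ht0 hs]
    nlinarith [mul_le_mul_of_nonneg_left hsle hα,
      mul_nonneg (mul_nonneg hα ht0.le) (by linarith : (0:ℝ) ≤ Real.cos (t/2) - 1/2)]
  -- step 3: drop [b, b₀]
  have hsplit2 : (∫ t in b..b₀, f t) + ∫ t in b₀..(Real.pi/2), f t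
      = ∫ t in b..(Real.pi/2), f t :=
    intervalIntegral.integral_add_adjacent_intervals hfi2 hfi3
  have hhead : 0 ≤ ∫ t in b..b₀, f t := by
    apply intervalIntegral.integral_nonneg hbb₀
    intro t ht
    have ht0 : 0 < t := lt_of_lt_of_le hb0 ht.1
    exact div_nonneg (hnn t ⟨ht0.le, by linarith [ht.2, hb₀.2]⟩) ht0.le
  have hchain : 4*Real.pi*(|M|+1) ≤ ∫ t in b..Real.pi, g t := by
    calc 4*Real.pi*(|M|+1) ≤ ∫ t in b₀..(Real.pi/2), f t := hI
      _ ≤ ∫ t in b..(Real.pi/2), f t := by linarith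
      _ ≤ ∫ t in b..(Real.pi/2), g t := hfg
      _ ≤ ∫ t in b..Real.pi, g t := by linarith
  have hpos : (0:ℝ) ≤ ∫ t in b..Real.pi, g t := by
    have : (0:ℝ) ≤ 4*Real.pi*(|M|+1) := by positivity
    linarith
  have hfinal := key r ⟨hr0, hr1⟩
  have hstep : M ≤ (r / (2 * Real.pi)) * ∫ t in b..Real.pi, g t := by
    have h14 : 1/(4*Real.pi) ≤ r/(2*Real.pi) := by
      rw [div_le_div_iff₀ (by positivity) (by positivity)]
      nlinarith
    calc M ≤ |M| + 1 := by have := le_abs_self M; linarith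
      _ = (1/(4*Real.pi)) * (4*Real.pi*(|M|+1)) := by field_simp
      _ ≤ (1/(4*Real.pi)) * ∫ t in b..Real.pi, g t :=
          mul_le_mul_of_nonneg_left hchain (by positivity)
      _ ≤ (r/(2*Real.pi)) * ∫ t in b..Real.pi, g t :=
          mul_le_mul_of_nonneg_right h14 hpos
  linarith
end
end

section
/- Let h be continuous on D_* ∪ I, where I ⊂ ∂D_* is an open arc, harmonic and strictly positive on D_*, with h = 0 on I, and suppose f = h + i·h̃ − i·μ₀/π extends analytically across I (h̃ the conjugate of h vanishing at 0, μ₀ ∈ ℝ). Then on I, the boundary function t ↦ Im f(e^{it}) is strictly monotone (non-increasing derivative from the Cauchy–Riemann equations, and not constant on any subarc), so f maps I injectively onto a subarc of the imaginary axis, and f has at most one zero on I. -/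
open MeasureTheory Metric Set Filter
open Topology

noncomputable section

private lemma hasDerivAt_circ (t : ℝ) :
    HasDerivAt (fun t : ℝ => Complex.exp ((t:ℂ) * Complex.I))
      (Complex.exp ((t:ℂ) * Complex.I) * Complex.I) t := by
  have h1 : HasDerivAt (fun t : ℝ => ((t:ℂ) * Complex.I)) Complex.I t := by
    simpa using (Complex.ofRealCLM.hasDerivAt (x := t)).mul_const Complex.I
  simpa using h1.cexp

private lemma circ_inj {t₁ t₂ : ℝ} (hd : |t₁ - t₂| < 2 * Real.pi)
    (he : Complex.exp ((t₁:ℂ) * Complex.I) = Complex.exp ((t₂:ℂ) * Complex.I)) : t₁ = t₂ := by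
  rw [Complex.exp_eq_exp_iff_exists_int] at he
  obtain ⟨n, hn⟩ := he
  have h2 : ((t₁:ℂ)) * Complex.I = ((t₂ + n * (2 * Real.pi) : ℝ) : ℂ) * Complex.I := by
    push_cast; linear_combination hn
  have h3 : (t₁ : ℂ) = ((t₂ + n * (2 * Real.pi) : ℝ) : ℂ) :=
    mul_right_cancel₀ Complex.I_ne_zero h2
  have h4 : t₁ = t₂ + n * (2 * Real.pi) := by exact_mod_cast h3
  have hπ := Real.pi_pos
  have h5 : |(n:ℝ)| * (2 * Real.pi) < 2 * Real.pi := by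
    calc |(n:ℝ)| * (2 * Real.pi) = |(n:ℝ) * (2 * Real.pi)| := by
          rw [abs_mul, abs_of_pos (by positivity : (0:ℝ) < 2 * Real.pi)]
      _ = |t₁ - t₂| := by rw [h4]; ring_nf
      _ < 2 * Real.pi := hd
  have h6 : |(n:ℝ)| < 1 := by nlinarith [abs_nonneg (n:ℝ)]
  have h7 : n = 0 := by
    have h8 : |n| < 1 := by exact_mod_cast (by push_cast; exact_mod_cast h6 : ((|n|:ℤ):ℝ) < ((1:ℤ):ℝ))
    rw [abs_lt] at h8; omega
  rw [h4, h7]; simp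

private lemma abs_circ (t : ℝ) : ‖Complex.exp ((t:ℂ) * Complex.I)‖ = 1 := by
  rw [Complex.norm_exp]; simp

/-- If `h` is continuous on `D_* ∪ I`, harmonic and positive on `D_*`, vanishes on the
open arc `I`, and `f = h + i·h̃ − i·μ₀/π` extends analytically across `I` (extension `G`
on an open `U ⊇ D_* ∪ I`), then `t ↦ Im G(e^{it})` is strictly monotone on `I`, `G` maps
`I` injectively into the imaginary axis, and `G` has at most one zero on `I`. -/
theorem stmt_12 (h htil : ℂ → ℝ) (μ₀ : ℝ) (a b : ℝ)
    (hab : a < b) (hlen : b - a < 2 * Real.pi)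
    (arcI : Set ℂ)
    (harc : arcI = (fun t : ℝ => Complex.exp ((t:ℂ) * Complex.I)) '' Set.Ioo a b)
    (hconj : HasHarmConj h htil)
    (hcont : ContinuousOn h (Metric.ball (0:ℂ) 1 ∪ arcI))
    (hpos : ∀ z ∈ Metric.ball (0:ℂ) 1, 0 < h z)
    (hzero : ∀ y ∈ arcI, h y = 0)
    (G : ℂ → ℂ) (U : Set ℂ)
    (hU : IsOpen U) (hsub : Metric.ball (0:ℂ) 1 ∪ arcI ⊆ U)
    (hG : DifferentiableOn ℂ G U)
    (hGeq : ∀ z ∈ Metric.ball (0:ℂ) 1,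
      G z = (h z : ℂ) + Complex.I * (htil z : ℂ) - Complex.I * ((μ₀ / Real.pi : ℝ) : ℂ)) :
    StrictAntiOn (fun t : ℝ => (G (Complex.exp ((t:ℂ) * Complex.I))).im) (Set.Ioo a b) ∧
    (∀ y ∈ arcI, (G y).re = 0) ∧
    Set.InjOn G arcI ∧
    (∀ y₁ ∈ arcI, ∀ y₂ ∈ arcI, G y₁ = 0 → G y₂ = 0 → y₁ = y₂) := by
  set c : ℝ → ℂ := fun t : ℝ => Complex.exp ((t:ℂ) * Complex.I) with hcdef
  set ψ : ℝ → ℝ := fun t : ℝ => (G (c t)).im with hψdef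
  have hball : ∀ y : ℂ, ‖y‖ = 1 → ∀ r ∈ Set.Ioo (0:ℝ) 1,
      (r:ℂ) * y ∈ Metric.ball (0:ℂ) 1 := by
    intro y hy r hr
    rw [Metric.mem_ball, dist_zero_right, norm_mul, hy,
      mul_one, Complex.norm_real, Real.norm_eq_abs, abs_of_pos hr.1]
    exact hr.2
  have hball0 : (0:ℂ) ∈ Metric.ball (0:ℂ) 1 := mem_ball_self one_pos
  have hmem : ∀ t ∈ Set.Ioo a b, c t ∈ arcI := fun t ht => harc ▸ ⟨t, ht, rfl⟩
  have harcU : arcI ⊆ U := fun y hy => hsub (Or.inr hy)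
  -- Re G = 0 on the arc
  have hre0 : ∀ y ∈ arcI, (G y).re = 0 := by
    intro y hy
    have hyU : y ∈ U := harcU hy
    have hy1 : ‖y‖ = 1 := by
      rw [harc] at hy; obtain ⟨t, _, rfl⟩ := hy; exact abs_circ t
    have hcont1 : Continuous (fun r : ℝ => (r:ℂ) * y) :=
      Complex.continuous_ofReal.mul continuous_const
    have h1 : Tendsto (fun r : ℝ => (r:ℂ) * y) (𝓝[<] (1:ℝ)) (𝓝 y) := by
      have := (hcont1.tendsto 1).mono_left (nhdsWithin_le_nhds (s := Set.Iio (1:ℝ)))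
      simpa using this
    have hev : ∀ᶠ (r : ℝ) in 𝓝[<] (1:ℝ), (r:ℂ) * y ∈ Metric.ball (0:ℂ) 1 := by
      filter_upwards [Ioo_mem_nhdsLT (by norm_num : (0:ℝ) < 1)] with r hr
      exact hball y hy1 r hr
    have h2 : Tendsto (fun r : ℝ => (G ((r:ℂ) * y)).re) (𝓝[<] (1:ℝ)) (𝓝 ((G y).re)) :=
      (Complex.continuous_re.tendsto _).comp
        (((hG.differentiableAt (hU.mem_nhds hyU)).continuousAt.tendsto).comp h1)
    have h3 : Tendsto (fun r : ℝ => h ((r:ℂ) * y)) (𝓝[<] (1:ℝ)) (𝓝 (h y)) :=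
      (hcont y (Or.inr hy)).tendsto.comp
        (tendsto_nhdsWithin_iff.mpr ⟨h1, hev.mono fun r hr => Or.inl hr⟩)
    have h4 : ∀ᶠ (r : ℝ) in 𝓝[<] (1:ℝ), (G ((r:ℂ) * y)).re = h ((r:ℂ) * y) := by
      filter_upwards [hev] with r hr
      rw [hGeq _ hr]; simp
    have h5 : (G y).re = h y := tendsto_nhds_unique (h2.congr' h4) h3
    rw [h5]; exact hzero y hy
  -- derivative of ψ
  have hψderiv : ∀ t ∈ Set.Ioo a b,
      HasDerivAt ψ ((deriv G (c t) * c t).re) t := by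
    intro t ht
    have hGd : DifferentiableAt ℂ G (c t) :=
      hG.differentiableAt (hU.mem_nhds (harcU (hmem t ht)))
    have h1 : HasDerivAt (fun s : ℝ => G (c s)) (deriv G (c t) * (c t * Complex.I)) t :=
      hGd.hasDerivAt.comp t (hasDerivAt_circ t)
    have h2 := Complex.imCLM.hasFDerivAt.comp_hasDerivAt t h1
    have h3 : HasDerivAt ψ ((deriv G (c t) * (c t * Complex.I)).im) t := h2
    simpa [← mul_assoc, Complex.mul_I_im] using h3
  -- radial derivative bound
  have hradial : ∀ t ∈ Set.Ioo a b, (deriv G (c t) * c t).re ≤ 0 := by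
    intro t ht
    have hy := hmem t ht
    have hGd : DifferentiableAt ℂ G (c t) := hG.differentiableAt (hU.mem_nhds (harcU hy))
    have hin : HasDerivAt (fun r : ℝ => (r:ℂ) * c t) (c t) 1 := by
      simpa using (Complex.ofRealCLM.hasDerivAt (x := (1:ℝ))).mul_const (c t)
    have hGd1 : HasDerivAt G (deriv G (c t)) (((1:ℝ):ℂ) * c t) := by
      rw [Complex.ofReal_one, one_mul]; exact hGd.hasDerivAt
    have h1 : HasDerivAt (fun r : ℝ => G ((r:ℂ) * c t)) (deriv G (c t) * c t) 1 :=
      hGd1.comp 1 hin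
    have h2 : HasDerivAt (fun r : ℝ => (G ((r:ℂ) * c t)).re) ((deriv G (c t) * c t).re) 1 :=
      Complex.reCLM.hasFDerivAt.comp_hasDerivAt 1 h1
    have hφ1 : (G (((1:ℝ):ℂ) * c t)).re = 0 := by
      rw [Complex.ofReal_one, one_mul]; exact hre0 _ hy
    have hslope : Tendsto (slope (fun r : ℝ => (G ((r:ℂ) * c t)).re) 1) (𝓝[≠] (1:ℝ))
        (𝓝 ((deriv G (c t) * c t).re)) := hasDerivAt_iff_tendsto_slope.mp h2
    have hslope' : Tendsto (slope (fun r : ℝ => (G ((r:ℂ) * c t)).re) 1) (𝓝[<] (1:ℝ))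
        (𝓝 ((deriv G (c t) * c t).re)) :=
      hslope.mono_left (nhdsWithin_mono 1 (fun x hx => ne_of_lt hx))
    refine le_of_tendsto hslope' ?_
    filter_upwards [Ioo_mem_nhdsLT (by norm_num : (0:ℝ) < 1)] with r hr
    have hb' := hball (c t) (abs_circ t) r hr
    have hpos' : 0 < (G ((r:ℂ) * c t)).re := by
      rw [hGeq _ hb']; simpa using hpos _ hb'
    rw [slope_def_field, hφ1, sub_zero]
    exact div_nonpos_of_nonneg_of_nonpos (le_of_lt hpos') (by linarith [hr.2])
  -- antitone
  have hanti : AntitoneOn ψ (Set.Ioo a b) := by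
    apply antitoneOn_of_deriv_nonpos (convex_Ioo a b)
    · exact fun t ht => ((hψderiv t ht).continuousAt).continuousWithinAt
    · intro t ht; rw [interior_Ioo] at ht
      exact ((hψderiv t ht).differentiableAt).differentiableWithinAt
    · intro t ht; rw [interior_Ioo] at ht
      rw [(hψderiv t ht).deriv]; exact hradial t ht
  -- not constant on any subinterval
  have hnotconst : ∀ t₁ ∈ Set.Ioo a b, ∀ t₂ ∈ Set.Ioo a b, t₁ < t₂ → ψ t₁ ≠ ψ t₂ := by
    intro t₁ h₁ t₂ h₂ hlt heq
    have hconst : ∀ t ∈ Set.Icc t₁ t₂, G (c t) = Complex.I * ((ψ t₁ : ℝ) : ℂ) := by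
      intro t ht
      have htm : t ∈ Set.Ioo a b := ⟨lt_of_lt_of_le h₁.1 ht.1, lt_of_le_of_lt ht.2 h₂.2⟩
      have him : ψ t = ψ t₁ := le_antisymm (hanti h₁ htm ht.1)
        (by rw [heq]; exact hanti htm h₂ ht.2)
      refine Complex.ext ?_ ?_
      · rw [hre0 _ (hmem t htm)]; simp
      · simpa using him
    -- identity theorem
    set V := connectedComponentIn U 0 with hVdef
    have h0U : (0:ℂ) ∈ U := hsub (Or.inl hball0)
    have hpre : IsPreconnected (Metric.ball (0:ℂ) 1 ∪ arcI) := by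
      refine (convex_ball (0:ℂ) 1).isPreconnected.subset_closure subset_union_left ?_
      rintro z (hz | hz)
      · exact subset_closure hz
      · rw [closure_ball (0:ℂ) one_ne_zero, mem_closedBall, dist_zero_right]
        rw [harc] at hz; obtain ⟨t, _, rfl⟩ := hz
        rw [abs_circ]
    have hsubV : Metric.ball (0:ℂ) 1 ∪ arcI ⊆ V :=
      hpre.subset_connectedComponentIn (Or.inl hball0) hsub
    have hVopen : IsOpen V := hU.connectedComponentIn
    have hVpre : IsPreconnected V :=
      (isConnected_connectedComponentIn_iff.mpr h0U).isPreconnected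
    have hGV : AnalyticOnNhd ℂ G V :=
      (hG.analyticOnNhd hU).mono (connectedComponentIn_subset U 0)
    have hz₀V : c t₁ ∈ V := hsubV (Or.inr (hmem t₁ h₁))
    have hevent : ∀ᶠ t in 𝓝[>] t₁, G (c t) = Complex.I * ((ψ t₁ : ℝ) : ℂ) ∧ c t ≠ c t₁ := by
      filter_upwards [Ioc_mem_nhdsGT hlt] with t ht
      refine ⟨hconst t ⟨le_of_lt ht.1, ht.2⟩, fun hceq => ?_⟩
      have habs : |t - t₁| < 2 * Real.pi := by
        rw [abs_of_pos (by linarith [ht.1])]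
        have := h₁.1; have := h₂.2; have := ht.2
        linarith
      exact absurd (circ_inj habs hceq) (ne_of_gt ht.1)
    have htt : Tendsto c (𝓝[>] t₁) (𝓝[≠] (c t₁)) := by
      refine tendsto_nhdsWithin_iff.mpr ⟨?_, hevent.mono fun t ht => ht.2⟩
      exact ((hasDerivAt_circ t₁).continuousAt.tendsto).mono_left nhdsWithin_le_nhds
    have hfreq : ∃ᶠ z in 𝓝[≠] (c t₁), G z = (fun _ => Complex.I * ((ψ t₁ : ℝ) : ℂ)) z :=
      htt.frequently ((hevent.mono fun t ht => ht.1).frequently)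
    have hEq : Set.EqOn G (fun _ => Complex.I * ((ψ t₁ : ℝ) : ℂ)) V :=
      hGV.eqOn_of_preconnected_of_frequently_eq analyticOnNhd_const hVpre hz₀V hfreq
    have h0V : (0:ℂ) ∈ V := hsubV (Or.inl hball0)
    have hG0 : G 0 = Complex.I * ((ψ t₁ : ℝ) : ℂ) := hEq h0V
    have hgr : (G 0).re = h 0 := by rw [hGeq 0 hball0]; simp
    rw [hG0] at hgr; simp at hgr
    linarith [hpos 0 hball0, hgr]
  have hstrict : StrictAntiOn ψ (Set.Ioo a b) := by
    intro x hx y hy hxy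
    rcases lt_or_eq_of_le (hanti hx hy (le_of_lt hxy)) with h' | h'
    · exact h'
    · exact absurd h'.symm (hnotconst x hx y hy hxy)
  refine ⟨hstrict, hre0, ?_, ?_⟩
  · intro y₁ hy₁ y₂ hy₂ hGy
    rw [harc] at hy₁ hy₂
    obtain ⟨t₁, ht₁, rfl⟩ := hy₁
    obtain ⟨t₂, ht₂, rfl⟩ := hy₂
    have : ψ t₁ = ψ t₂ := by simp only [hψdef, hcdef]; rw [hGy]
    rw [hstrict.injOn ht₁ ht₂ this]
  · intro y₁ hy₁ y₂ hy₂ hz₁ hz₂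
    rw [harc] at hy₁ hy₂
    obtain ⟨t₁, ht₁, rfl⟩ := hy₁
    obtain ⟨t₂, ht₂, rfl⟩ := hy₂
    have : ψ t₁ = ψ t₂ := by simp only [hψdef, hcdef]; rw [hz₁, hz₂]
    rw [hstrict.injOn ht₁ ht₂ this]
end
end

section
/- Let ν be a finite positive Borel measure on the unit circle ∂D_*, fix x ∈ ∂D_*, let c = ν({x}), and let h(z) = ∫_{∂D_*} ((1−|z|²)/|y−z|²) dν(y) be the Poisson integral of ν. Then lim_{r→1⁻} (1−r)·h(rx) = 2c. Moreover, if c > 0, then for any real μ₀ and with h̃ the conjugate of h vanishing at 0, ∫_0^1 h(rx)/((h(rx))² + (h̃(rx) − μ₀/π)²) · dr/(1−r) ≤ ∫_0^1 dr/((1−r)·h(rx)) < ∞. -/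
open MeasureTheory Metric Set Filter

noncomputable section

/-- For a finite positive measure `ν` on the unit circle with Poisson integral `h`, a
point `x` on the circle and `c = ν({x})`: `(1−r)·h(rx) → 2c` as `r → 1⁻`; and if
`c > 0` then for any `μ₀` and conjugate `h̃` of `h`,
`∫₀¹ h(rx)/((h(rx))²+(h̃(rx)−μ₀/π)²) · dr/(1−r) ≤ ∫₀¹ dr/((1−r)h(rx)) < ∞`. -/
theorem stmt_15 (ν : MeasureTheory.Measure ℂ) [MeasureTheory.IsFiniteMeasure ν]
    (hν : ν (Metric.sphere (0:ℂ) 1)ᶜ = 0)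
    (x : ℂ) (hx : x ∈ Metric.sphere (0:ℂ) 1)
    (h : ℂ → ℝ)
    (hdef : ∀ z, h z = ∫ y, (1 - (‖z‖)^2) / (‖y - z‖)^2 ∂ν) :
    Filter.Tendsto (fun r : ℝ => (1 - r) * h ((r:ℂ) * x))
      (nhdsWithin 1 (Set.Iio 1)) (nhds (2 * (ν {x}).toReal)) ∧
    (0 < (ν {x}).toReal → ∀ (μ₀ : ℝ) (htil : ℂ → ℝ), HasHarmConj h htil →
      (∫⁻ r in Set.Ioo (0:ℝ) 1,
          ENNReal.ofReal (h ((r:ℂ) * x)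
            / ((h ((r:ℂ) * x))^2 + (htil ((r:ℂ) * x) - μ₀ / Real.pi)^2) * (1 / (1 - r))))
        ≤ ∫⁻ r in Set.Ioo (0:ℝ) 1, ENNReal.ofReal (1 / ((1 - r) * h ((r:ℂ) * x))) ∧
      (∫⁻ r in Set.Ioo (0:ℝ) 1, ENNReal.ofReal (1 / ((1 - r) * h ((r:ℂ) * x)))) < ⊤) := by
  have hx1 : ‖x‖ = 1 := by simpa using hx
  set c := (ν {x}).toReal with hc
  set l := nhdsWithin (1:ℝ) (Set.Iio 1) with hl
  set fr : ℝ → ℂ → ℝ := fun r y => (1 - r^2) / (‖y - (r:ℂ)*x‖)^2 with hfr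
  -- rewrite h (r x)
  have hre : ∀ r : ℝ, h ((r:ℂ)*x) = ∫ y, fr r y ∂ν := by
    intro r
    rw [hdef]
    congr 1
    ext y
    rw [norm_mul, Complex.norm_real, Real.norm_eq_abs, hx1, mul_one, sq_abs]
  -- measurability
  have hmeas : ∀ r : ℝ, Measurable (fr r) := by
    intro r
    exact measurable_const.div
      ((continuous_norm.comp (continuous_id.sub continuous_const)).pow 2).measurable
  -- a.e. statements
  have haeν : ∀ᵐ y ∂ν, y ∈ Metric.sphere (0:ℂ) 1 := by
    rw [ae_iff]
    simpa [Set.compl_def] using hν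
  -- basic estimates on the sphere
  have habs_lb : ∀ r : ℝ, r ∈ Set.Ioo (0:ℝ) 1 → ∀ y ∈ Metric.sphere (0:ℂ) 1,
      1 - r ≤ ‖y - (r:ℂ)*x‖ := by
    intro r hr y hy
    have hy1 : ‖y‖ = 1 := by simpa using hy
    have : ‖y‖ - ‖(r:ℂ)*x‖ ≤ ‖y - (r:ℂ)*x‖ :=
      norm_sub_norm_le _ _
    rw [hy1, norm_mul, Complex.norm_real, Real.norm_eq_abs, hx1, mul_one, abs_of_pos hr.1] at this
    exact this
  have habs_ub : ∀ r : ℝ, r ∈ Set.Ioo (0:ℝ) 1 → ∀ y ∈ Metric.sphere (0:ℂ) 1,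
      ‖y - (r:ℂ)*x‖ ≤ 1 + r := by
    intro r hr y hy
    have hy1 : ‖y‖ = 1 := by simpa using hy
    calc ‖y - (r:ℂ)*x‖ ≤ ‖y‖ + ‖(r:ℂ)*x‖ :=
          norm_sub_le _ _
      _ = 1 + r := by rw [hy1, norm_mul, Complex.norm_real, Real.norm_eq_abs, hx1, mul_one, abs_of_pos hr.1]
  -- integrability
  have hint : ∀ r : ℝ, r ∈ Set.Ioo (0:ℝ) 1 → Integrable (fr r) ν := by
    intro r hr
    refine Integrable.mono' (integrable_const ((1 - r^2)/(1-r)^2)) (hmeas r).aestronglyMeasurable ?_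
    filter_upwards [haeν] with y hy
    have h1 : 1 - r ≤ ‖y - (r:ℂ)*x‖ := habs_lb r hr y hy
    have h2 : (0:ℝ) < 1 - r := by linarith [hr.2]
    have h3 : (1-r)^2 ≤ (‖y - (r:ℂ)*x‖)^2 := by nlinarith [norm_nonneg (y - (r:ℂ)*x)]
    have h4 : (0:ℝ) ≤ 1 - r^2 := by nlinarith [hr.1, hr.2]
    rw [Real.norm_eq_abs, abs_of_nonneg (div_nonneg h4 (sq_nonneg _))]
    exact div_le_div_of_nonneg_left h4 (by positivity) h3
  -- splitting
  have hsplit : ∀ r : ℝ, r ∈ Set.Ioo (0:ℝ) 1 →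
      (1-r) * h ((r:ℂ)*x) = c * (1+r) + ∫ y, (1-r) * fr r y ∂(ν.restrict {x}ᶜ) := by
    intro r hr
    have h2 : (0:ℝ) < 1 - r := by linarith [hr.2]
    have hsing : ∫ y in {x}, fr r y ∂ν = c * fr r x := by
      rw [integral_singleton]; rfl
    have hfx : fr r x = (1 - r^2)/(1-r)^2 := by
      have : x - (r:ℂ)*x = ((1:ℝ) - r : ℝ) * x := by push_cast; ring
      rw [hfr]
      simp only [this, norm_mul, Complex.norm_real, Real.norm_eq_abs, hx1, mul_one, abs_of_pos h2]
    have := integral_add_compl (measurableSet_singleton x) (hint r hr)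
    rw [hre r, ← this, hsing, hfx]
    rw [integral_const_mul]
    have h1r : (1:ℝ) + r ≠ 0 := by linarith [hr.1]
    field_simp
    ring
  -- tendsto of remainder term to 0
  have hIoo : Set.Ioo (0:ℝ) 1 ∈ l := by
    rw [hl]
    exact mem_nhdsWithin.2 ⟨Set.Ioi 0, isOpen_Ioi, by norm_num, fun r hr => ⟨hr.1, hr.2⟩⟩
  have haecσ : ∀ᵐ y ∂(ν.restrict {x}ᶜ), y ∈ Metric.sphere (0:ℂ) 1 ∧ y ≠ x := by
    have h1 : ∀ᵐ y ∂(ν.restrict {x}ᶜ), y ∈ Metric.sphere (0:ℂ) 1 :=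
      ae_mono Measure.restrict_le_self haeν
    have h2 : ∀ᵐ y ∂(ν.restrict {x}ᶜ), y ≠ x := by
      rw [ae_iff]
      have : {y : ℂ | ¬ y ≠ x} = {x} := by ext y; simp
      rw [this, Measure.restrict_apply (measurableSet_singleton x)]
      simp
    filter_upwards [h1, h2] with y hy1 hy2 using ⟨hy1, hy2⟩
  have htend0 : Tendsto (fun r : ℝ => ∫ y, (1-r) * fr r y ∂(ν.restrict {x}ᶜ)) l (nhds 0) := by
    have : Tendsto (fun r : ℝ => ∫ y, (1-r) * fr r y ∂(ν.restrict {x}ᶜ)) l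
        (nhds (∫ _y, (0:ℝ) ∂(ν.restrict {x}ᶜ))) := by
      apply tendsto_integral_filter_of_dominated_convergence (fun _ => (2:ℝ))
      · filter_upwards with r
        exact (measurable_const.mul (hmeas r)).aestronglyMeasurable
      · filter_upwards [hIoo] with r hr
        filter_upwards [haecσ] with y hy
        have h1 : 1 - r ≤ ‖y - (r:ℂ)*x‖ := habs_lb r hr y hy.1
        have h2 : (0:ℝ) < 1 - r := by linarith [hr.2]
        have h3 : (1-r)^2 ≤ (‖y - (r:ℂ)*x‖)^2 := by
          nlinarith [norm_nonneg (y - (r:ℂ)*x)]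
        have h4 : (0:ℝ) ≤ 1 - r^2 := by nlinarith [hr.1, hr.2]
        have h5 : (1-r) * fr r y ≤ (1-r) * ((1 - r^2)/(1-r)^2) := by
          apply mul_le_mul_of_nonneg_left _ (le_of_lt h2)
          exact div_le_div_of_nonneg_left h4 (by positivity) h3
        have h6 : (1-r) * ((1 - r^2)/(1-r)^2) = 1 + r := by field_simp; ring
        rw [Real.norm_eq_abs, abs_of_nonneg (by positivity)]
        rw [h6] at h5
        linarith [hr.2]
      · exact integrable_const 2
      · filter_upwards [haecσ] with y hy
        have hne : ‖y - x‖ ≠ 0 := by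
          simp only [ne_eq, norm_eq_zero, sub_eq_zero]
          exact hy.2
        have hden : Tendsto (fun r : ℝ => (‖y - (r:ℂ)*x‖)^2) (nhds 1)
            (nhds ((‖y - x‖)^2)) := by
          have hc : Continuous (fun r : ℝ => (‖y - (r:ℂ)*x‖)^2) :=
            ((continuous_norm.comp
              (continuous_const.sub (Complex.continuous_ofReal.mul continuous_const))).pow 2)
          have := hc.tendsto 1
          simpa using this
        have hnum : Tendsto (fun r : ℝ => (1-r) * (1 - r^2)) (nhds (1:ℝ)) (nhds 0) := by
          have hc : Continuous (fun r : ℝ => (1-r) * (1 - r^2)) :=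
            (continuous_const.sub continuous_id).mul (continuous_const.sub (continuous_pow 2))
          have := hc.tendsto 1
          simpa using this
        have : Tendsto (fun r : ℝ => ((1-r) * (1 - r^2)) / (‖y - (r:ℂ)*x‖)^2)
            (nhds 1) (nhds (0 / (‖y - x‖)^2)) :=
          hnum.div hden (by positivity)
        rw [zero_div] at this
        have heq : (fun r : ℝ => ((1-r) * (1 - r^2)) / (‖y - (r:ℂ)*x‖)^2)
            = fun r : ℝ => (1-r) * fr r y := by
          ext r; rw [hfr]; ring
        rw [heq] at this
        exact this.mono_left nhdsWithin_le_nhds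
    simpa using this
  -- main tendsto
  have htendc : Tendsto (fun r : ℝ => c * (1+r)) l (nhds (2*c)) := by
    have hc2 : Continuous (fun r : ℝ => c * (1+r)) :=
      continuous_const.mul (continuous_const.add continuous_id)
    have h12 : c * (1 + (1:ℝ)) = 2 * c := by ring
    have := (hc2.tendsto 1).mono_left (nhdsWithin_le_nhds (s := Set.Iio 1))
    rwa [h12] at this
  have hmain : Tendsto (fun r : ℝ => (1 - r) * h ((r:ℂ) * x)) l (nhds (2*c)) := by
    have hsum := htendc.add htend0
    rw [add_zero] at hsum
    apply hsum.congr'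
    filter_upwards [hIoo] with r hr
    exact (hsplit r hr).symm
  refine ⟨hmain, ?_⟩
  -- Part 2
  intro hcpos μ₀ htil _
  set T := (ν Set.univ).toReal with hT
  have hcT : c ≤ T := ENNReal.toReal_mono (measure_ne_top ν _) (measure_mono (Set.subset_univ _))
  have hTpos : 0 < T := lt_of_lt_of_le hcpos hcT
  -- lower bound for h(rx)
  have hlow : ∀ r : ℝ, r ∈ Set.Ioo (0:ℝ) 1 → (1-r)/(1+r) * T ≤ h ((r:ℂ)*x) := by
    intro r hr
    have h2 : (0:ℝ) < 1 - r := by linarith [hr.2]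
    have h1r : (0:ℝ) < 1 + r := by linarith [hr.1]
    rw [hre r]
    have : ∫ _y, (1-r)/(1+r) ∂ν ≤ ∫ y, fr r y ∂ν := by
      apply integral_mono_ae (integrable_const _) (hint r hr)
      filter_upwards [haeν] with y hy
      have hub := habs_ub r hr y hy
      have hlb := habs_lb r hr y hy
      have hden : (0:ℝ) < (‖y - (r:ℂ)*x‖)^2 := by nlinarith
      have h3 : (‖y - (r:ℂ)*x‖)^2 ≤ (1+r)^2 := by
        nlinarith [norm_nonneg (y - (r:ℂ)*x)]
      rw [hfr, div_le_div_iff₀ h1r hden]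
      nlinarith [h3, h2]
    rw [integral_const] at this
    rw [mul_comm]
    simpa [smul_eq_mul, hT, measureReal_def] using this
  have hpos : ∀ r : ℝ, r ∈ Set.Ioo (0:ℝ) 1 → 0 < h ((r:ℂ)*x) := by
    intro r hr
    have h2 : (0:ℝ) < 1 - r := by linarith [hr.2]
    have h1r : (0:ℝ) < 1 + r := by linarith [hr.1]
    exact lt_of_lt_of_le (by positivity) (hlow r hr)
  -- eventual lower bound near 1
  have hev : ∀ᶠ (r : ℝ) in l, c < (1-r) * h ((r:ℂ)*x) := by
    have hcc : ∀ᶠ y in nhds (2*c), c < y := eventually_gt_nhds (show c < 2*c by linarith)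
    exact hmain.eventually hcc
  obtain ⟨a, ha, hsub⟩ := mem_nhdsLT_iff_exists_Ioo_subset.1 hev
  set r₀ : ℝ := max a (1/2) with hr₀
  have hr₀1 : r₀ < 1 := by
    rw [hr₀]
    exact max_lt ha (by norm_num)
  have hr₀pos : (0:ℝ) < 1 - r₀ := by linarith
  set m : ℝ := min c ((1-r₀)^2/2 * T) with hm
  have hmpos : 0 < m := by
    apply lt_min hcpos
    positivity
  have hmb : ∀ r : ℝ, r ∈ Set.Ioo (0:ℝ) 1 → m ≤ (1-r) * h ((r:ℂ)*x) := by
    intro r hr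
    rcases le_or_gt r r₀ with hcase | hcase
    · have h2 : (0:ℝ) < 1 - r := by linarith [hr.2]
      have h1r : (0:ℝ) < 1 + r := by linarith [hr.1]
      have := hlow r hr
      have key : (1-r₀)^2/2 * T ≤ (1-r) * ((1-r)/(1+r) * T) := by
        rw [show (1-r) * ((1-r)/(1+r) * T) = (1-r)^2/(1+r) * T by field_simp]
        apply mul_le_mul_of_nonneg_right _ (le_of_lt hTpos)
        rw [div_le_div_iff₀ (by norm_num) h1r]
        nlinarith [hr.1, hr.2]
      calc m ≤ (1-r₀)^2/2 * T := min_le_right _ _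
        _ ≤ (1-r) * ((1-r)/(1+r) * T) := key
        _ ≤ (1-r) * h ((r:ℂ)*x) := mul_le_mul_of_nonneg_left this (le_of_lt h2)
    · have : r ∈ Set.Ioo a 1 := ⟨lt_of_le_of_lt (le_max_left a (1/2)) hcase, hr.2⟩
      exact le_trans (min_le_left _ _) (le_of_lt (hsub this))
  -- finiteness
  have hfin : (∫⁻ r in Set.Ioo (0:ℝ) 1, ENNReal.ofReal (1 / ((1 - r) * h ((r:ℂ) * x)))) < ⊤ := by
    have hb : (∫⁻ r in Set.Ioo (0:ℝ) 1, ENNReal.ofReal (1 / ((1 - r) * h ((r:ℂ) * x))))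
        ≤ ∫⁻ _r in Set.Ioo (0:ℝ) 1, ENNReal.ofReal (1/m) := by
      apply lintegral_mono_ae
      rw [ae_restrict_iff' measurableSet_Ioo]
      filter_upwards with r hr
      exact ENNReal.ofReal_le_ofReal (one_div_le_one_div_of_le hmpos (hmb r hr))
    refine lt_of_le_of_lt hb ?_
    rw [setLIntegral_const]
    simp [Real.volume_Ioo]
  refine ⟨?_, hfin⟩
  apply lintegral_mono_ae
  rw [ae_restrict_iff' measurableSet_Ioo]
  filter_upwards with r hr
  apply ENNReal.ofReal_le_ofReal
  set a' := h ((r:ℂ)*x) with ha'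
  set b' := htil ((r:ℂ)*x) - μ₀ / Real.pi with hb'
  have hapos : 0 < a' := hpos r hr
  have h2 : (0:ℝ) < 1 - r := by linarith [hr.2]
  have key : a' / (a'^2 + b'^2) ≤ 1 / a' := by
    rw [div_le_div_iff₀ (by positivity) hapos]
    nlinarith [sq_nonneg b']
  calc a' / (a'^2 + b'^2) * (1/(1-r)) ≤ (1/a') * (1/(1-r)) :=
        mul_le_mul_of_nonneg_right key (by positivity)
    _ = 1 / ((1-r) * a') := by rw [one_div_mul_one_div]; ring_nf
end
end

section
/- Let D = F(D_*) where F(z) = √(1−z) (principal branch) maps the open unit disk D_* conformally onto D, and define h on D by h(w) = Re((1+z)/(1−z)) with z = F^{-1}(w) = 1 − w². Then h is positive harmonic on D but h ∉ L^1(D); in fact, with C = {z ∈ D_* : 1−|z|² > |1−z|}, one has ∫_D h(w) dw = ∫_C Re((1+z)/(1−z))·|F'(z)|² dz ≥ (1/4)∫_C |1−z|^{−2} dz = ∞. -/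
open MeasureTheory Metric Set Filter

noncomputable section

lemma sector_lintegral_top (f : ℂ → ℝ) (hf : Measurable f) (R c k : ℝ)
    (hR : 0 < R) (hc : 0 < c) (hk : 0 < k)
    (hbound : ∀ z : ℂ, 0 < z.re → z.re < R → |z.im| < c * z.re → k / z.re ^ 2 ≤ f z) :
    ∫⁻ z in {z : ℂ | 0 < z.re ∧ z.re < R ∧ |z.im| < c * z.re}, ENNReal.ofReal (f z) = ⊤ := by
  set a : ℕ → ℝ := fun n => R / 2 ^ (n + 1) with ha
  have hapos : ∀ n, 0 < a n := fun n => div_pos hR (by positivity)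
  set Q : ℕ → Set ℂ := fun n =>
    {z : ℂ | z.re ∈ Ioo (a n) (2 * a n) ∧ z.im ∈ Ioo (-(c * a n)) (c * a n)} with hQ
  have hQm : ∀ n, MeasurableSet (Q n) := by
    intro n
    exact (Complex.measurable_re measurableSet_Ioo).inter (Complex.measurable_im measurableSet_Ioo)
  have hQsub : ∀ n, Q n ⊆ {z : ℂ | 0 < z.re ∧ z.re < R ∧ |z.im| < c * z.re} := by
    intro n z hz
    obtain ⟨⟨h1, h2⟩, h3, h4⟩ := hz
    have h5 : 0 < z.re := (hapos n).trans h1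
    refine ⟨h5, ?_, ?_⟩
    · have h2n : (1:ℝ) ≤ 2 ^ n := one_le_pow₀ one_le_two
      calc z.re < 2 * a n := h2
        _ = R / 2 ^ n := by rw [ha]; field_simp; ring
        _ ≤ R := by rw [div_le_iff₀ (by positivity)]; nlinarith
    · have : |z.im| < c * a n := abs_lt.2 ⟨h3, h4⟩
      calc |z.im| < c * a n := this
        _ < c * z.re := by nlinarith
  have hkey : ∀ m n : ℕ, m < n → 2 * a n ≤ a m := by
    intro m n hmn
    have hle : (2:ℝ) ^ (m + 1) ≤ 2 ^ n := pow_le_pow_right₀ one_le_two (by omega)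
    have e1 : 2 * a n = R / 2 ^ n := by rw [ha]; field_simp; ring
    rw [e1, ha]
    exact div_le_div_of_nonneg_left hR.le (by positivity) hle
  have hdisj : Pairwise (Function.onFun Disjoint Q) := by
    intro m n hmn
    rcases hmn.lt_or_gt with hlt | hlt
    · rw [Function.onFun, Set.disjoint_left]
      rintro z ⟨⟨h1, -⟩, -⟩ ⟨⟨-, h4⟩, -⟩
      have := hkey m n hlt; linarith
    · rw [Function.onFun, Set.disjoint_left]
      rintro z ⟨⟨-, h2⟩, -⟩ ⟨⟨h3, -⟩, -⟩
      have := hkey n m hlt; linarith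
  have hvol : ∀ n, volume (Q n) = ENNReal.ofReal (a n) * ENNReal.ofReal (2 * (c * a n)) := by
    intro n
    have heq : Q n = Complex.measurableEquivRealProd ⁻¹'
        ((Ioo (a n) (2 * a n)) ×ˢ (Ioo (-(c * a n)) (c * a n))) := by
      ext z
      simp [Complex.measurableEquivRealProd_apply, hQ]
    rw [heq, Complex.volume_preserving_equiv_real_prod.measure_preimage
      (measurableSet_Ioo.prod measurableSet_Ioo).nullMeasurableSet]
    rw [show (volume : Measure (ℝ × ℝ)) = (volume : Measure ℝ).prod volume from rfl,
      Measure.prod_prod, Real.volume_Ioo, Real.volume_Ioo]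
    congr 1
    · congr 1; ring
    · congr 1; ring
  have hterm : ∀ n, ENNReal.ofReal (k * c / 2) ≤ ∫⁻ z in Q n, ENNReal.ofReal (f z) := by
    intro n
    have hconst : ∀ z ∈ Q n, ENNReal.ofReal (k / (2 * a n) ^ 2) ≤ ENNReal.ofReal (f z) := by
      intro z hz
      obtain ⟨hz1, hz2, hz3⟩ := hQsub n hz
      apply ENNReal.ofReal_le_ofReal
      refine le_trans ?_ (hbound z hz1 hz2 hz3)
      apply div_le_div_of_nonneg_left hk.le (by positivity)
      nlinarith [hz.1.2, hz1]
    calc ENNReal.ofReal (k * c / 2)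
        = ENNReal.ofReal (k / (2 * a n) ^ 2) * volume (Q n) := by
          rw [hvol n, ← ENNReal.ofReal_mul (by positivity), ← ENNReal.ofReal_mul (by positivity)]
          congr 1
          have := (hapos n).ne'
          field_simp
      _ = ∫⁻ _ in Q n, ENNReal.ofReal (k / (2 * a n) ^ 2) := (setLIntegral_const _ _).symm
      _ ≤ ∫⁻ z in Q n, ENNReal.ofReal (f z) :=
          setLIntegral_mono (ENNReal.measurable_ofReal.comp hf) hconst
  refine eq_top_iff.2 ?_
  calc (⊤ : ENNReal) = ∑' _ : ℕ, ENNReal.ofReal (k * c / 2) :=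
        (ENNReal.tsum_const_eq_top_of_ne_zero (by positivity)).symm
    _ ≤ ∑' n, ∫⁻ z in Q n, ENNReal.ofReal (f z) := ENNReal.tsum_le_tsum hterm
    _ = ∫⁻ z in ⋃ n, Q n, ENNReal.ofReal (f z) := (lintegral_iUnion hQm hdisj _).symm
    _ ≤ _ := lintegral_mono_set (Set.iUnion_subset hQsub)

lemma re_div_one_sub (z : ℂ) :
    ((1 + z) / (1 - z)).re = (1 - Complex.normSq z) / Complex.normSq (1 - z) := by
  rw [Complex.div_re, ← add_div]
  congr 1
  simp [Complex.normSq_apply]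
  ring

lemma h_re_formula (w : ℂ) :
    (((1 + (1 - w^2)) / (1 - (1 - w^2)) : ℂ)).re
      = (2*(w.re^2 - w.im^2) - (w.re^2 + w.im^2)^2) / (w.re^2 + w.im^2)^2 := by
  have h1 : (1 : ℂ) - (1 - w^2) = w^2 := by ring
  rw [h1, Complex.div_re]
  have hns : Complex.normSq (w^2) = (w.re^2 + w.im^2)^2 := by
    simp [Complex.normSq_apply, pow_two, Complex.mul_re, Complex.mul_im]; ring
  rw [← add_div, hns]
  congr 1
  simp [Complex.normSq_apply, pow_two, Complex.mul_re, Complex.mul_im, Complex.sub_re,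
    Complex.sub_im, Complex.add_re, Complex.add_im, Complex.one_re, Complex.one_im]
  ring

lemma abs_deriv_F_sq (F : ℂ → ℂ) (hF : ∀ z, F z = (1 - z) ^ ((1:ℂ)/2)) (z : ℂ)
    (hz : 0 < (1 - z).re) :
    ‖deriv F z‖ ^ 2 = 1 / (4 * ‖1 - z‖) := by
  have hne : (1 : ℂ) - z ≠ 0 := by
    intro h; rw [h] at hz; simp at hz
  have h1 : HasDerivAt (fun w : ℂ => 1 - w) (-1) z := (hasDerivAt_id z).const_sub 1
  have h2 : HasDerivAt (fun w : ℂ => (1 - w) ^ ((1:ℂ)/2))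
      (((1:ℂ)/2) * (1 - z) ^ ((1:ℂ)/2 - 1) * (-1)) z :=
    h1.cpow_const (Complex.mem_slitPlane_iff.2 (Or.inl hz))
  have hFd : deriv F z = ((1:ℂ)/2) * (1 - z) ^ ((1:ℂ)/2 - 1) * (-1) := by
    have : F = fun w : ℂ => (1 - w) ^ ((1:ℂ)/2) := funext hF
    rw [this]; exact h2.deriv
  rw [hFd]
  rw [norm_mul, norm_mul]
  have habs : ‖(1 - z) ^ ((1:ℂ)/2 - 1)‖ = ‖1 - z‖ ^ (-(1/2) : ℝ) := by
    rw [Complex.norm_cpow_of_ne_zero hne]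
    norm_num
  rw [habs]
  have h3 : ‖(1:ℂ)/2‖ = 1/2 := by simp
  have h4 : ‖(-1 : ℂ)‖ = 1 := by simp
  rw [h3, h4, mul_one]
  have h5 : (‖1 - z‖ ^ (-(1/2) : ℝ)) ^ 2 = ‖1 - z‖ ^ (-1 : ℝ) := by
    rw [← Real.rpow_natCast (‖1 - z‖ ^ (-(1/2) : ℝ)) 2,
      ← Real.rpow_mul (norm_nonneg _)]
    norm_num
  rw [mul_pow, h5, Real.rpow_neg_one]
  rw [div_pow]
  norm_num
  ring

set_option maxHeartbeats 2000000 in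
/-- Let `D = F(D_*)` with `F(z) = (1−z)^{1/2}` (principal branch) and
`h(w) = Re((1+z)/(1−z))` with `z = 1 − w²`. Then `h` is positive harmonic on `D` but not
in `L¹(D)`; indeed, with `C = {z ∈ D_* : 1−|z|² > |1−z|}`, the `L¹` mass of `h` over `D`
equals `∫_C Re((1+z)/(1−z))|F'(z)|² dz ≥ (1/4)∫_C |1−z|^{−2} dz = ∞`. -/
theorem stmt_19 (F : ℂ → ℂ) (hF : ∀ z, F z = (1 - z) ^ ((1:ℂ) / 2))
    (h : ℂ → ℝ) (hh : ∀ w, h w = (((1 + (1 - w^2)) / (1 - (1 - w^2)) : ℂ)).re)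
    (D C : Set ℂ)
    (hD : D = F '' Metric.ball (0:ℂ) 1)
    (hC : C = {z : ℂ | z ∈ Metric.ball (0:ℂ) 1 ∧
      ‖1 - z‖ < 1 - (‖z‖)^2}) :
    (∃ G : ℂ → ℂ, DifferentiableOn ℂ G D ∧ ∀ w ∈ D, (G w).re = h w) ∧
    (∀ w ∈ D, 0 < h w) ∧
    ¬ MeasureTheory.IntegrableOn h D ∧
    (∫⁻ w in D, ENNReal.ofReal (h w))
      = (∫⁻ z in C, ENNReal.ofReal ((((1 + z) / (1 - z)).re) * (‖deriv F z‖)^2)) ∧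
    (1 / 4 : ENNReal) * (∫⁻ z in C, ENNReal.ofReal (1 / (‖1 - z‖)^2))
      ≤ (∫⁻ z in C, ENNReal.ofReal ((((1 + z) / (1 - z)).re) * (‖deriv F z‖)^2)) ∧
    (1 / 4 : ENNReal) * (∫⁻ z in C, ENNReal.ofReal (1 / (‖1 - z‖)^2)) = ⊤ := by
  -- basic facts
  have hball : ∀ z : ℂ, z ∈ Metric.ball (0:ℂ) 1 → 0 < (1 - z).re := by
    intro z hz
    rw [Metric.mem_ball, dist_zero_right] at hz
    have h1 : |z.re| ≤ ‖z‖ := Complex.abs_re_le_norm z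
    have h2 : ‖z‖ < 1 := hz
    have h3 : z.re < 1 := lt_of_le_of_lt ((le_abs_self z.re).trans h1) h2
    simp only [Complex.sub_re, Complex.one_re]
    linarith
  have hzero : (0:ℂ) ∉ D := by
    rw [hD]; rintro ⟨z, hz, hzF⟩
    rw [hF] at hzF
    rcases (Complex.cpow_eq_zero_iff _ _).1 hzF with ⟨h1, -⟩
    have h2 := hball z hz
    rw [h1] at h2
    simp at h2
  -- membership criteria
  have hmemD : ∀ w : ℂ, 0 < w.re → w.re < 1/2 → |w.im| < 1/2 * w.re → w ∈ D := by
    intro w hx hxR hy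
    have hy2 : w.im^2 < (1/2 * w.re)^2 := by
      have := abs_lt.1 hy; nlinarith
    have hns : Complex.normSq (1 - w^2)
        = (1 - (w.re^2 - w.im^2))^2 + (2*w.re*w.im)^2 := by
      simp [Complex.normSq_apply, pow_two, Complex.mul_re, Complex.mul_im, Complex.sub_re,
        Complex.sub_im, Complex.one_re, Complex.one_im]
      ring
    have hball' : (1 - w^2) ∈ Metric.ball (0:ℂ) 1 := by
      rw [Metric.mem_ball, dist_zero_right]
      have hx2 : w.re^2 < 1/4 := by nlinarith
      have hs1 : w.re^2 + w.im^2 <= 5/4 * w.re^2 := by nlinarith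
      have hs2 : (w.re^2 + w.im^2)^2 <= (5/4 * w.re^2)^2 := by nlinarith
      have hsq : (‖1 - w^2‖)^2 < 1 := by
        rw [Complex.sq_norm, hns]; nlinarith
      have := norm_nonneg (1 - w^2)
      show ‖1 - w^2‖ < 1
      nlinarith
    have hFw : F (1 - w^2) = w := by
      rw [hF]
      have e : (1:ℂ) - (1 - w^2) = w^2 := by ring
      rw [e, one_div]
      exact Complex.sq_cpow_two_inv hx
    rw [hD]
    exact ⟨1 - w^2, hball', hFw⟩
  have hmemC : ∀ u : ℂ, 0 < u.re → u.re < 1/4 → |u.im| < 1 * u.re → (1 - u) ∈ C := by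
    intro u hx hxR hy
    have hy2 : u.im^2 < u.re^2 := by
      have := abs_lt.1 hy; nlinarith
    have hns : Complex.normSq (1 - u) = (1 - u.re)^2 + u.im^2 := by
      simp [Complex.normSq_apply, Complex.sub_re, Complex.sub_im, Complex.one_re, Complex.one_im]
      ring
    have habs1 : (‖1 - u‖)^2 = (1 - u.re)^2 + u.im^2 := by
      rw [Complex.sq_norm, hns]
    rw [hC]
    constructor
    · rw [Metric.mem_ball, dist_zero_right]
      have hsq : (‖1 - u‖)^2 < 1 := by rw [habs1]; nlinarith
      have := norm_nonneg (1 - u)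
      show ‖1 - u‖ < 1
      nlinarith
    · show ‖1 - (1 - u)‖ < 1 - (‖1 - u‖)^2
      have e : (1:ℂ) - (1 - u) = u := by ring
      rw [e, habs1]
      have habsu : (‖u‖)^2 = u.re^2 + u.im^2 := by
        rw [Complex.sq_norm, Complex.normSq_apply]; ring
      have hB : 0 < 1 - ((1 - u.re)^2 + u.im^2) := by nlinarith
      have : (‖u‖)^2 < (1 - ((1 - u.re)^2 + u.im^2))^2 := by
        rw [habsu]; nlinarith
      nlinarith [norm_nonneg u]
  -- measurability of h
  have hmeas_h : Measurable h := by
    have e : h = fun w => (((1 + (1 - w^2)) / (1 - (1 - w^2)) : ℂ)).re := funext hh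
    rw [e]
    have m0 : Measurable (fun z : ℂ => z ^ 2) := measurable_id.pow_const 2
    have m1 : Measurable (fun z : ℂ => 1 - z^2) := measurable_const.sub m0
    exact Complex.measurable_re.comp ((measurable_const.add m1).div (measurable_const.sub m1))
  -- the divergence over D
  have htopD : (∫⁻ w in D, ENNReal.ofReal (h w)) = ⊤ := by
    have hbD : ∀ w : ℂ, 0 < w.re → w.re < 1/2 → |w.im| < 1/2 * w.re →
        (1/2 : ℝ) / w.re ^ 2 ≤ h w := by
      intro w hx hxR hy
      have hy2 : w.im^2 < (1/2 * w.re)^2 := by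
        have := abs_lt.1 hy; nlinarith
      rw [hh w, h_re_formula w]
      have hs : 0 < w.re^2 + w.im^2 := by nlinarith
      rw [div_le_div_iff₀ (by positivity) (by positivity)]
      have hs1 : w.re^2 + w.im^2 ≤ 5/4 * w.re^2 := by nlinarith
      have hs2 : (w.re^2 + w.im^2)^2 ≤ (5/4 * w.re^2)^2 := by nlinarith
      have hx2 : w.re^2 < 1/4 := by nlinarith
      nlinarith
    have hsec := sector_lintegral_top h hmeas_h (1/2) (1/2) (1/2)
      (by norm_num) (by norm_num) (by norm_num) hbD
    rw [eq_top_iff, ← hsec]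
    exact lintegral_mono_set (fun w hw => hmemD w hw.1 hw.2.1 hw.2.2)
  -- the substitution machinery
  have hpre : MeasurePreserving (fun u : ℂ => 1 - u) volume volume :=
    Measure.measurePreserving_sub_left volume 1
  have hemb : MeasurableEmbedding (fun u : ℂ => 1 - u) :=
    (MeasurableEquiv.subLeft (1:ℂ)).measurableEmbedding
  have hsub2 : {u : ℂ | 0 < u.re ∧ u.re < 1/4 ∧ |u.im| < 1 * u.re}
      ⊆ (fun u : ℂ => 1 - u) ⁻¹' C := fun u hu => hmemC u hu.1 hu.2.1 hu.2.2
  have m1 : Measurable (fun u : ℂ => 1 - u) := measurable_const.sub measurable_id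
  -- basics for the sector at 1
  have husec : ∀ u : ℂ, 0 < u.re → u.re < 1/4 → |u.im| < 1 * u.re →
      ((‖u‖)^2 = u.re^2 + u.im^2 ∧ 0 < ‖u‖ ∧
        (‖u‖)^2 < 2 * u.re^2 ∧ ‖u‖ < 3/2 * u.re) := by
    intro u hx hxR hy
    have hy2 : u.im^2 < u.re^2 := by
      have := abs_lt.1 hy; nlinarith
    have habsu : (‖u‖)^2 = u.re^2 + u.im^2 := by
      rw [Complex.sq_norm, Complex.normSq_apply]; ring
    have hu0 : u ≠ 0 := by
      intro hcon; rw [hcon] at hx; simp at hx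
    have hA : 0 < ‖u‖ := norm_pos_iff.mpr hu0
    have h2 : (‖u‖)^2 < 2 * u.re^2 := by rw [habsu]; nlinarith
    have h3 : ‖u‖ < 3/2 * u.re := by nlinarith
    exact ⟨habsu, hA, h2, h3⟩
  -- divergence of ∫_C 1/|1-z|²
  have htopC1 : (∫⁻ z in C, ENNReal.ofReal (1 / (‖1 - z‖)^2)) = ⊤ := by
    have hmeasf : Measurable (fun u : ℂ => 1 / (‖1 - (1 - u)‖)^2) :=
      measurable_const.div (((measurable_const.sub m1).norm).pow_const 2)
    have hb : ∀ u : ℂ, 0 < u.re → u.re < 1/4 → |u.im| < 1 * u.re →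
        (1/2 : ℝ) / u.re ^ 2 ≤ 1 / (‖1 - (1 - u)‖)^2 := by
      intro u hx hxR hy
      obtain ⟨habsu, hA, h2, h3⟩ := husec u hx hxR hy
      have e : (1:ℂ) - (1 - u) = u := by ring
      rw [e, div_le_div_iff₀ (by positivity) (by positivity)]
      nlinarith
    have hsec := sector_lintegral_top _ hmeasf (1/4) 1 (1/2)
      (by norm_num) (by norm_num) (by norm_num) hb
    have hcomp := hpre.setLIntegral_comp_preimage_emb hemb
      (fun z => ENNReal.ofReal (1 / (‖1 - z‖)^2)) C
    rw [eq_top_iff]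
    calc (⊤:ENNReal) = _ := hsec.symm
      _ ≤ ∫⁻ u in (fun u : ℂ => 1 - u) ⁻¹' C,
            ENNReal.ofReal (1 / (‖1 - (1 - u)‖)^2) := lintegral_mono_set hsub2
      _ = ∫⁻ z in C, ENNReal.ofReal (1 / (‖1 - z‖)^2) := hcomp
  -- divergence of ∫_C Re((1+z)/(1-z))·|F'|²
  have htopC2 : (∫⁻ z in C,
      ENNReal.ofReal ((((1 + z) / (1 - z)).re) * (‖deriv F z‖)^2)) = ⊤ := by
    have hmeasf : Measurable (fun u : ℂ =>
        (((1 + (1 - u)) / (1 - (1 - u))).re) * (‖deriv F (1 - u)‖)^2) := by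
      exact (Complex.measurable_re.comp
        ((measurable_const.add m1).div (measurable_const.sub m1))).mul
        (((measurable_deriv F).comp m1).norm.pow_const 2)
    have hb : ∀ u : ℂ, 0 < u.re → u.re < 1/4 → |u.im| < 1 * u.re →
        (1/16 : ℝ) / u.re ^ 2
          ≤ (((1 + (1 - u)) / (1 - (1 - u))).re) * (‖deriv F (1 - u)‖)^2 := by
      intro u hx hxR hy
      obtain ⟨habsu, hA, h2, h3⟩ := husec u hx hxR hy
      have e : (1:ℂ) - (1 - u) = u := by ring
      have hre0 : 0 < (1 - (1 - u)).re := by rw [e]; exact hx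
      rw [abs_deriv_F_sq F hF _ hre0, re_div_one_sub, e]
      have hns1 : Complex.normSq (1 - u) = 1 - 2*u.re + (u.re^2 + u.im^2) := by
        simp [Complex.normSq_apply, Complex.sub_re, Complex.sub_im, Complex.one_re,
          Complex.one_im]
        ring
      have hnsu : Complex.normSq u = u.re^2 + u.im^2 := by
        rw [Complex.normSq_apply]; ring
      rw [hns1, hnsu]
      set A := ‖u‖ with hAdef
      have hs : u.re^2 + u.im^2 = A^2 := habsu.symm
      rw [hs]
      have heq : (1 - (1 - 2*u.re + A^2)) / A^2 * (1 / (4 * A))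
          = (2*u.re - A^2) / (4 * A^3) := by
        field_simp
        ring
      rw [heq, div_le_div_iff₀ (by positivity) (by positivity)]
      have k1 : A * A^2 < (3/2 * u.re) * (2 * u.re^2) := by nlinarith
      have k2 : A^2 < 2 * u.re^2 := h2
      have k3 : 2 * u.re^2 < 1/2 * u.re := by nlinarith
      nlinarith [pow_pos hx 3]
    have hsec := sector_lintegral_top _ hmeasf (1/4) 1 (1/16)
      (by norm_num) (by norm_num) (by norm_num) hb
    have hcomp := hpre.setLIntegral_comp_preimage_emb hemb
      (fun z => ENNReal.ofReal ((((1 + z) / (1 - z)).re) * (‖deriv F z‖)^2)) C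
    rw [eq_top_iff]
    calc (⊤:ENNReal) = _ := hsec.symm
      _ ≤ ∫⁻ u in (fun u : ℂ => 1 - u) ⁻¹' C,
            ENNReal.ofReal ((((1 + (1 - u)) / (1 - (1 - u))).re)
              * (‖deriv F (1 - u)‖)^2) := lintegral_mono_set hsub2
      _ = _ := hcomp
  refine ⟨?_, ?_, ?_, ?_, ?_, ?_⟩
  · -- existence of analytic G with Re G = h
    refine ⟨fun w => (1 + (1 - w^2)) / (1 - (1 - w^2)), ?_, fun w _ => (hh w).symm⟩
    apply DifferentiableOn.div
    · exact (Differentiable.differentiableOn (by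
        exact (differentiable_const _).add ((differentiable_const _).sub (differentiable_pow 2))))
    · exact (Differentiable.differentiableOn
        ((differentiable_const _).sub ((differentiable_const _).sub (differentiable_pow 2))))
    · intro w hw heq
      have e : (1:ℂ) - (1 - w^2) = w^2 := by ring
      rw [e] at heq
      have : w = 0 := by
        have := pow_eq_zero_iff (n := 2) (by norm_num) |>.1 heq
        exact this
      rw [this] at hw
      exact hzero hw
  · -- positivity
    intro w hw
    rw [hD] at hw
    obtain ⟨z, hz, hFz⟩ := hw
    have hw2 : w^2 = 1 - z := by
      rw [← hFz, hF, one_div]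
      exact Complex.cpow_ofNat_inv_pow _ 2
    have h1z : (1:ℂ) - w^2 = z := by rw [hw2]; ring
    rw [hh w, h1z, re_div_one_sub]
    have hzlt : ‖z‖ < 1 := by
      rw [Metric.mem_ball, dist_zero_right] at hz; exact hz
    have hnum : 0 < 1 - Complex.normSq z := by
      rw [← Complex.sq_norm]
      nlinarith [norm_nonneg z]
    have hden : 0 < Complex.normSq (1 - z) := by
      apply Complex.normSq_pos.2
      intro hcon
      have := hball z hz
      rw [hcon] at this; simp at this
    exact div_pos hnum hden
  · -- not integrable
    intro hInt
    have hle : (∫⁻ w in D, ENNReal.ofReal (h w)) ≤ ∫⁻ w in D, ‖h w‖ₑ :=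
      lintegral_mono fun w => Real.ofReal_le_enorm _
    rw [htopD, top_le_iff] at hle
    have hfin := hInt.2
    rw [HasFiniteIntegral, hle] at hfin
    exact lt_irrefl _ hfin
  · rw [htopD, htopC2]
  · rw [htopC2]; exact le_top
  · rw [htopC1]
    exact ENNReal.mul_top (by norm_num)
end
end
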